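/- If ‖Zᵢ‖_F ≤ γ for each i = 1,…,n and each I + Zᵢ is orthogonal, then for every vector x, the norm distortion of R̃ = I + Σᵢ Zᵢ is bounded: | ‖R̃x‖² − ‖x‖² | ≤ n(n−1)γ² ‖x‖². -/

import Mathlib

open Matrix Finset

attribute [local instance] Matrix.frobeniusNormedAddCommGroup

private lemma dot_cs {d : ℕ} (u v : Fin d → ℝ) : (u ⬝ᵥ v) ^ 2 ≤ (u ⬝ᵥ u) * (v ⬝ᵥ v) := by
  simpa [dotProduct, sq] using Finset.sum_mul_sq_le_sq_mul_sq Finset.univ u v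

private lemma dot_self_nonneg {d : ℕ} (u : Fin d → ℝ) : 0 ≤ u ⬝ᵥ u :=
  Finset.sum_nonneg fun i _ => mul_self_nonneg _

private lemma sum_dot {d : ℕ} {ι : Type*} (s : Finset ι) (g : ι → Fin d → ℝ)
    (v : Fin d → ℝ) : (∑ i ∈ s, g i) ⬝ᵥ v = ∑ i ∈ s, g i ⬝ᵥ v := by
  simp only [dotProduct, Finset.sum_apply, Finset.sum_mul]
  exact Finset.sum_comm

private lemma dot_sum {d : ℕ} {ι : Type*} (s : Finset ι) (g : ι → Fin d → ℝ)
    (v : Fin d → ℝ) : v ⬝ᵥ (∑ i ∈ s, g i) = ∑ i ∈ s, v ⬝ᵥ g i := by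
  simp only [dotProduct, Finset.sum_apply, Finset.mul_sum]
  exact Finset.sum_comm

private lemma frob_sq {d : ℕ} (A : Matrix (Fin d) (Fin d) ℝ) :
    ∑ i, ∑ j, (A i j) ^ 2 = ‖A‖ ^ 2 := by
  rw [Matrix.frobenius_norm_def A, ← Real.rpow_natCast ((∑ i, ∑ j, ‖A i j‖ ^ (2:ℝ)) ^ (1/2:ℝ)) 2,
    ← Real.rpow_mul (by positivity)]
  rw [show (1/2 : ℝ) * (2:ℕ) = 1 by norm_num, Real.rpow_one]
  refine Finset.sum_congr rfl fun i _ => Finset.sum_congr rfl fun j _ => ?_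
  rw [show ((2:ℝ)) = ((2:ℕ):ℝ) by norm_num, Real.rpow_natCast]
  simp [sq_abs]

private lemma mulVec_dot_le {d : ℕ} (A : Matrix (Fin d) (Fin d) ℝ) (x : Fin d → ℝ) :
    (A.mulVec x ⬝ᵥ A.mulVec x) ≤ ‖A‖ ^ 2 * (x ⬝ᵥ x) := by
  rw [← frob_sq]
  have h : ∀ i, (A.mulVec x i) * (A.mulVec x i) ≤ (∑ j, (A i j) ^ 2) * (x ⬝ᵥ x) := by
    intro i
    have := Finset.sum_mul_sq_le_sq_mul_sq Finset.univ (A i) x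
    calc A.mulVec x i * A.mulVec x i = (∑ j, A i j * x j) ^ 2 := by
          simp [Matrix.mulVec, dotProduct, sq]
      _ ≤ (∑ j, (A i j) ^ 2) * (∑ j, (x j) ^ 2) := this
      _ = (∑ j, (A i j) ^ 2) * (x ⬝ᵥ x) := by simp [dotProduct, sq]
  calc A.mulVec x ⬝ᵥ A.mulVec x = ∑ i, (A.mulVec x i) * (A.mulVec x i) := rfl
    _ ≤ ∑ i, (∑ j, (A i j) ^ 2) * (x ⬝ᵥ x) := Finset.sum_le_sum fun i _ => h i
    _ = (∑ i, ∑ j, (A i j) ^ 2) * (x ⬝ᵥ x) := by rw [Finset.sum_mul]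

theorem norm_distortion_bound {d n : ℕ}
    (Z : Fin n → Matrix (Fin d) (Fin d) ℝ) (γ : ℝ)
    (horth : ∀ i, (1 + Z i)ᵀ * (1 + Z i) = 1)
    (hnorm : ∀ i, ‖Z i‖ ≤ γ)
    (x : Fin d → ℝ) :
    |((1 + ∑ i, Z i).mulVec x ⬝ᵥ (1 + ∑ i, Z i).mulVec x) - x ⬝ᵥ x| ≤
      n * (n - 1) * γ ^ 2 * (x ⬝ᵥ x) := by
  rcases Nat.eq_zero_or_pos n with hn | hn
  · subst hn
    simp [Matrix.one_mulVec]
  have hγ : 0 ≤ γ := le_trans (norm_nonneg _) (hnorm ⟨0, hn⟩)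
  have hx : 0 ≤ x ⬝ᵥ x := dot_self_nonneg x
  set f : Fin n → Fin d → ℝ := fun i => (Z i).mulVec x with hf
  -- orthogonality relations
  have h1 : ∀ i, x ⬝ᵥ f i + f i ⬝ᵥ x + f i ⬝ᵥ f i = 0 := by
    intro i
    have h := horth i
    have key : ((1 + Z i).mulVec x) ⬝ᵥ ((1 + Z i).mulVec x) = x ⬝ᵥ x := by
      have : (1 + Z i)ᵀ.mulVec ((1 + Z i).mulVec x) = x := by
        rw [Matrix.mulVec_mulVec, h, Matrix.one_mulVec]
      calc ((1 + Z i).mulVec x) ⬝ᵥ ((1 + Z i).mulVec x)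
          = x ⬝ᵥ (1 + Z i)ᵀ.mulVec ((1 + Z i).mulVec x) := by
            rw [Matrix.mulVec_transpose, Matrix.dotProduct_mulVec]
            exact dotProduct_comm _ _
        _ = x ⬝ᵥ x := by rw [this]
    rw [Matrix.add_mulVec, Matrix.one_mulVec] at key
    have expand : (x + f i) ⬝ᵥ (x + f i)
        = x ⬝ᵥ x + (x ⬝ᵥ f i + f i ⬝ᵥ x + f i ⬝ᵥ f i) := by
      simp [dotProduct_add, add_dotProduct]; ring
    rw [expand] at key
    linarith
  -- bound on each f i ⬝ f i
  have hfi : ∀ i, f i ⬝ᵥ f i ≤ γ ^ 2 * (x ⬝ᵥ x) := by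
    intro i
    calc f i ⬝ᵥ f i ≤ ‖Z i‖ ^ 2 * (x ⬝ᵥ x) := mulVec_dot_le (Z i) x
      _ ≤ γ ^ 2 * (x ⬝ᵥ x) := by
          apply mul_le_mul_of_nonneg_right _ hx
          exact pow_le_pow_left₀ (norm_nonneg _) (hnorm i) 2
  have hpair : ∀ i j, |f i ⬝ᵥ f j| ≤ γ ^ 2 * (x ⬝ᵥ x) := by
    intro i j
    have hcs := dot_cs (f i) (f j)
    have hi := hfi i
    have hj := hfi j
    have hii := dot_self_nonneg (f i)
    have hjj := dot_self_nonneg (f j)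
    have hc : 0 ≤ γ ^ 2 * (x ⬝ᵥ x) := by positivity
    rw [abs_le]
    constructor <;> nlinarith [sq_nonneg (f i ⬝ᵥ f j)]
  -- decompose the difference
  have hsum : (1 + ∑ i, Z i).mulVec x = x + ∑ i, f i := by
    rw [Matrix.add_mulVec, Matrix.one_mulVec]
    congr 1
    simp [hf]
    induction (Finset.univ : Finset (Fin n)) using Finset.induction with
    | empty => simp
    | insert a s hni ih => simp [Finset.sum_insert hni, Matrix.add_mulVec, ih]
  have hdiff : ((1 + ∑ i, Z i).mulVec x ⬝ᵥ (1 + ∑ i, Z i).mulVec x) - x ⬝ᵥ x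
      = ∑ i, ∑ j ∈ Finset.univ \ {i}, f i ⬝ᵥ f j := by
    rw [hsum]
    have e1 : (x + ∑ i, f i) ⬝ᵥ (x + ∑ i, f i)
        = x ⬝ᵥ x + (∑ i, (x ⬝ᵥ f i + f i ⬝ᵥ x)) + ∑ i, ∑ j, f i ⬝ᵥ f j := by
      rw [dotProduct_add, add_dotProduct, add_dotProduct, sum_dot, dot_sum]
      have : (∑ i, f i) ⬝ᵥ (∑ i, f i) = ∑ i, ∑ j, f i ⬝ᵥ f j := by
        rw [sum_dot]
        exact Finset.sum_congr rfl fun i _ => dot_sum _ _ _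
      rw [this, Finset.sum_add_distrib]
      ring
    rw [e1]
    have e2 : ∀ i : Fin n, x ⬝ᵥ f i + f i ⬝ᵥ x = -(f i ⬝ᵥ f i) := fun i => by
      have := h1 i; linarith
    simp_rw [e2]
    have e3 : ∀ i : Fin n, ∑ j, f i ⬝ᵥ f j
        = f i ⬝ᵥ f i + ∑ j ∈ Finset.univ \ {i}, f i ⬝ᵥ f j := fun i =>
      Finset.sum_eq_add_sum_sdiff_singleton_of_mem (Finset.mem_univ i) (fun j => f i ⬝ᵥ f j)
    simp_rw [e3]
    rw [Finset.sum_add_distrib, Finset.sum_neg_distrib]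
    ring
  rw [hdiff]
  calc |∑ i, ∑ j ∈ Finset.univ \ {i}, f i ⬝ᵥ f j|
      ≤ ∑ i, |∑ j ∈ Finset.univ \ {i}, f i ⬝ᵥ f j| := Finset.abs_sum_le_sum_abs _ _
    _ ≤ ∑ i : Fin n, ∑ j ∈ Finset.univ \ {i}, |f i ⬝ᵥ f j| :=
        Finset.sum_le_sum fun i _ => Finset.abs_sum_le_sum_abs _ _
    _ ≤ ∑ i : Fin n, ∑ j ∈ Finset.univ \ {i}, γ ^ 2 * (x ⬝ᵥ x) :=
        Finset.sum_le_sum fun i _ => Finset.sum_le_sum fun j _ => hpair i j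
    _ = n * (n - 1) * γ ^ 2 * (x ⬝ᵥ x) := by
        simp [Finset.sum_const, Finset.card_sdiff_of_subset, Finset.card_univ]
        rw [Nat.cast_sub hn]
        push_cast
        ring
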